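/- Let X_1,…,X_n be real-valued random variables and Θ_1,…,Θ_n non-negative random variables, each non-degenerate at zero, satisfying Assumption A2 with functions g_{ij}. Then E[g_{ij}(Θ_i,Θ_j)] = 1 for every pair 1≤i≠j≤n. -/

import Mathlib

open MeasureTheory ProbabilityTheory Filter Topology Set

noncomputable section

namespace RWS

variable {Ω : Type} [MeasurableSpace Ω]

/-- The probability of an event, as a real number. -/
def pr (μ : Measure Ω) (s : Set Ω) : ℝ := (μ s).toReal

/-- The tail function `x ↦ P[X > x]` of a real-valued random variable `X`. -/
def tail (μ : Measure Ω) (X : Ω → ℝ) (x : ℝ) : ℝ := pr μ {ω | X ω > x}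

/-- The support of (the distribution of) a real-valued random variable. -/
def supp (μ : Measure Ω) (Θ : Ω → ℝ) : Set ℝ :=
  {θ : ℝ | ∀ δ > 0, 0 < μ {ω | Θ ω ∈ Icc (θ - δ) (θ + δ)}}

/-- `Θ` is non-degenerate at zero. -/
def NonDegAtZero (μ : Measure Ω) (Θ : Ω → ℝ) : Prop := 0 < μ {ω | Θ ω ≠ 0}

/-- `c` is the conditional probability of the event `A` given `Θ = θ`, defined as the limit
as `δ ↓ 0` of the probability of `A` conditioned on `Θ ∈ [θ-δ, θ+δ]`. -/
def IsCondProb (μ : Measure Ω) (Θ : Ω → ℝ) (A : Set Ω) (θ c : ℝ) : Prop :=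
  Tendsto (fun δ : ℝ =>
      pr μ (A ∩ {ω | Θ ω ∈ Icc (θ - δ) (θ + δ)}) / pr μ {ω | Θ ω ∈ Icc (θ - δ) (θ + δ)})
    (nhdsWithin 0 (Ioi 0)) (nhds c)

/-- `c` is the conditional probability of `A` given `Θi = θi, Θj = θj`, defined as the limit
as `δ ↓ 0` of the probability of `A` conditioned on `Θi ∈ [θi-δ, θi+δ], Θj ∈ [θj-δ, θj+δ]`. -/
def IsCondProb2 (μ : Measure Ω) (Θi Θj : Ω → ℝ) (A : Set Ω) (θi θj c : ℝ) : Prop :=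
  Tendsto (fun δ : ℝ =>
      pr μ (A ∩ {ω | Θi ω ∈ Icc (θi - δ) (θi + δ) ∧ Θj ω ∈ Icc (θj - δ) (θj + δ)}) /
        pr μ {ω | Θi ω ∈ Icc (θi - δ) (θi + δ) ∧ Θj ω ∈ Icc (θj - δ) (θj + δ)})
    (nhdsWithin 0 (Ioi 0)) (nhds c)

/-- The distribution of `X` under `μ` has a dominatedly varying tail (class `𝒟`). -/
def DomVar (μ : Measure Ω) (X : Ω → ℝ) : Prop :=
  ∀ b ∈ Ioo (0:ℝ) 1,
    IsBoundedUnder (· ≤ ·) atTop (fun x => tail μ X (b * x) / tail μ X x)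

/-- The distribution of `X` under `μ` is long-tailed (class `ℒ`). -/
def LongTail (μ : Measure Ω) (X : Ω → ℝ) : Prop :=
  ∀ a > (0:ℝ), Tendsto (fun x => tail μ X (x - a) / tail μ X x) atTop (nhds 1)

/-- The distribution of `X` under `μ` is consistently varying (class `𝒞`). -/
def ConsVar (μ : Measure Ω) (X : Ω → ℝ) : Prop :=
  Tendsto (fun v : ℝ => limsup (fun x => tail μ X (v * x) / tail μ X x) atTop)
    (nhdsWithin 1 (Iio 1)) (nhds 1)

/-- The distribution of `X` under `μ` is regularly varying with index `-α` (class `ℛ₋α`). -/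
def RegVar (μ : Measure Ω) (X : Ω → ℝ) (α : ℝ) : Prop :=
  ∀ b > (0:ℝ), Tendsto (fun x => tail μ X (b * x) / tail μ X x) atTop (nhds (b ^ (-α)))

/-- The `L`-index `L_F = lim_{v↓1} liminf_{x→∞} F̄(vx)/F̄(x)` of the distribution of `X`. -/
def Lindex (μ : Measure Ω) (X : Ω → ℝ) : ℝ :=
  limUnder (nhdsWithin 1 (Ioi 1))
    (fun v => liminf (fun x => tail μ X (v * x) / tail μ X x) atTop)

/-- `Xi` and `Xj` are tail asymptotically independent:
`P[|Xi| > xi | Xj > xj] → 0` as `xi ∧ xj → ∞`. -/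
def TAIpair (μ : Measure Ω) (Xi Xj : Ω → ℝ) : Prop :=
  Tendsto (fun p : ℝ × ℝ =>
      pr μ {ω | |Xi ω| > p.1 ∧ Xj ω > p.2} / pr μ {ω | Xj ω > p.2})
    (atTop ×ˢ atTop) (nhds 0)

/-- `Xi` and `Xj` are quasi-asymptotically independent. -/
def QAIpair (μ : Measure Ω) (Xi Xj : Ω → ℝ) : Prop :=
  Tendsto (fun x : ℝ =>
      pr μ {ω | max (Xi ω) 0 > x ∧ max (Xj ω) 0 > x} / (tail μ Xi x + tail μ Xj x))
    atTop (nhds 0) ∧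
  Tendsto (fun x : ℝ =>
      pr μ {ω | max (-Xi ω) 0 > x ∧ Xj ω > x} / (tail μ Xi x + tail μ Xj x))
    atTop (nhds 0)

/-- The requirements on an auxiliary function `b` from Assumption A1:
`b > 0`, `b(x) → ∞` and `b(x)/x → 0`. -/
def A1fun (b : ℝ → ℝ) : Prop :=
  (∀ x, 0 < b x) ∧ Tendsto b atTop atTop ∧ Tendsto (fun x => b x / x) atTop (nhds 0)

/-- The little-o condition of Assumption A1 for the ordered pair `(Xi, Θi), (Xj, Θj)`:
`P[Θi > bi(xi)] = o(P[Θi Xi > xi, Θj Xj > xj])` as `xi ∧ xj → ∞`. -/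
def A1pair (μ : Measure Ω) (Xi Θi Xj Θj : Ω → ℝ) (bi : ℝ → ℝ) : Prop :=
  Tendsto (fun p : ℝ × ℝ =>
      pr μ {ω | Θi ω > bi p.1} /
        pr μ {ω | Θi ω * Xi ω > p.1 ∧ Θj ω * Xj ω > p.2})
    (atTop ×ˢ atTop) (nhds 0)

/-- Assumption A2 for an ordered pair, with function `gij`:
`P[|Xi| > xi, Xj > xj | Θi = θi, Θj = θj] ~ gij(θi,θj) ⬝ P[|Xi| > xi, Xj > xj]`
as `xi ∧ xj → ∞`, uniformly over the supports. -/
def A2pair (μ : Measure Ω) (Xi Θi Xj Θj : Ω → ℝ) (gij : ℝ → ℝ → ℝ) : Prop :=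
  Measurable (Function.uncurry gij) ∧
  (∀ θi θj : ℝ, 0 ≤ θi → 0 ≤ θj → 0 < gij θi θj) ∧
  ∃ cp : ℝ → ℝ → ℝ → ℝ → ℝ,
    (∀ θi ∈ supp μ Θi, ∀ θj ∈ supp μ Θj, ∀ xi xj : ℝ,
      IsCondProb2 μ Θi Θj {ω | |Xi ω| > xi ∧ Xj ω > xj} θi θj (cp θi θj xi xj)) ∧
    TendstoUniformlyOn
      (fun (x : ℝ × ℝ) (θ : ℝ × ℝ) =>
        cp θ.1 θ.2 x.1 x.2 / (gij θ.1 θ.2 * pr μ {ω | |Xi ω| > x.1 ∧ Xj ω > x.2}))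
      (fun _ => 1) (atTop ×ˢ atTop) (supp μ Θi ×ˢ supp μ Θj)

/-- Assumption A3 (A3') for a single pair `(X, Θ)` with function `h`:
`P[X > x | Θ = θ] ~ h(θ) ⬝ P[X > x]` as `x → ∞`, uniformly over the support of `Θ`. -/
def A3' (μ : Measure Ω) (X Θ : Ω → ℝ) (h : ℝ → ℝ) : Prop :=
  (∀ θ : ℝ, 0 ≤ θ → 0 < h θ) ∧
  ∃ cp : ℝ → ℝ → ℝ,
    (∀ θ ∈ supp μ Θ, ∀ x : ℝ, IsCondProb μ Θ {ω | X ω > x} θ (cp θ x)) ∧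
    TendstoUniformlyOn (fun (x : ℝ) (θ : ℝ) => cp θ x / (h θ * tail μ X x))
      (fun _ => 1) atTop (supp μ Θ)

/-- The additional two-sided uniform asymptotic bounds of Assumption A4, for one ordered
pair, with constants `L ≤ U`:
`L gij(θi,θj) P[Xi > xi, Xj > xj] ≲ P[Xi > xi, Xj > xj | Θi = θi, Θj = θj]
   ≲ U gij(θi,θj) P[Xi > xi, Xj > xj]` as `xi ∧ xj → ∞`, uniformly over the supports. -/
def A4pair (μ : Measure Ω) (Xi Θi Xj Θj : Ω → ℝ) (gij : ℝ → ℝ → ℝ) (L U : ℝ) : Prop :=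
  ∃ cp : ℝ → ℝ → ℝ → ℝ → ℝ,
    (∀ θi ∈ supp μ Θi, ∀ θj ∈ supp μ Θj, ∀ xi xj : ℝ,
      IsCondProb2 μ Θi Θj {ω | Xi ω > xi ∧ Xj ω > xj} θi θj (cp θi θj xi xj)) ∧
    ∀ ε > (0:ℝ), ∀ᶠ x : ℝ × ℝ in atTop ×ˢ atTop,
      ∀ θi ∈ supp μ Θi, ∀ θj ∈ supp μ Θj,
        (1 - ε) * (L * (gij θi θj * pr μ {ω | Xi ω > x.1 ∧ Xj ω > x.2})) ≤
            cp θi θj x.1 x.2 ∧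
          cp θi θj x.1 x.2 ≤
            (1 + ε) * (U * (gij θi θj * pr μ {ω | Xi ω > x.1 ∧ Xj ω > x.2}))

/-- Assumption A1 for a finite family. -/
def A1 (μ : Measure Ω) {n : ℕ} (X Θ : Fin n → Ω → ℝ) (b : Fin n → ℝ → ℝ) : Prop :=
  (∀ i, A1fun (b i)) ∧
  ∀ i j, i ≠ j → A1pair μ (X i) (Θ i) (X j) (Θ j) (b i)

/-- Assumption A2 for a finite family. -/
def A2 (μ : Measure Ω) {n : ℕ} (X Θ : Fin n → Ω → ℝ)
    (g : Fin n → Fin n → ℝ → ℝ → ℝ) : Prop :=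
  ∀ i j, i ≠ j → A2pair μ (X i) (Θ i) (X j) (Θ j) (g i j)

/-- Assumption A3 for a finite family. -/
def A3 (μ : Measure Ω) {n : ℕ} (X Θ : Fin n → Ω → ℝ) (h : Fin n → ℝ → ℝ) : Prop :=
  ∀ i, A3' μ (X i) (Θ i) (h i)

/-- Assumption A4 for a finite family. -/
def A4 (μ : Measure Ω) {n : ℕ} (X Θ : Fin n → Ω → ℝ)
    (g : Fin n → Fin n → ℝ → ℝ → ℝ) : Prop :=
  A2 μ X Θ g ∧
  ∃ L U : ℝ, 0 < L ∧ L ≤ U ∧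
    ∀ i j, i ≠ j → A4pair μ (X i) (Θ i) (X j) (Θ j) (g i j) L U

/-- Pairwise tail asymptotic independence of a finite family. -/
def pTAI (μ : Measure Ω) {n : ℕ} (X : Fin n → Ω → ℝ) : Prop :=
  ∀ i j, i ≠ j → TAIpair μ (X i) (X j)

/-- Pairwise quasi-asymptotic independence of a finite family. -/
def pQAI (μ : Measure Ω) {n : ℕ} (X : Fin n → Ω → ℝ) : Prop :=
  ∀ i j, i ≠ j → QAIpair μ (X i) (X j)

/-- The randomly weighted and stopped sum `S_N^Θ`. -/
def SNsum (Θs Xs : ℕ → Ω → ℝ) (N : Ω → ℕ) (ω : Ω) : ℝ :=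
  ∑ i ∈ Finset.range (N ω), Θs i ω * Xs i ω

/-- The randomly stopped maximum of weighted sums `S_(N)^Θ` (equal to `0` when `N = 0`). -/
def SNmax (Θs Xs : ℕ → Ω → ℝ) (N : Ω → ℕ) (ω : Ω) : ℝ :=
  ⨆ k ∈ Finset.range (N ω), ∑ i ∈ Finset.range (k + 1), Θs i ω * Xs i ω

/-- The randomly stopped maximum of weighted summands `X_(N)^Θ` (equal to `0` when `N = 0`). -/
def XNmax (Θs Xs : ℕ → Ω → ℝ) (N : Ω → ℕ) (ω : Ω) : ℝ :=
  ⨆ i ∈ Finset.range (N ω), Θs i ω * Xs i ω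


/-- The complement of the support of a random variable is open. -/
lemma isOpen_compl_supp (μ : Measure Ω) (Θ : Ω → ℝ) : IsOpen (supp μ Θ)ᶜ := by
  rw [Metric.isOpen_iff]
  intro t ht
  simp only [supp, mem_compl_iff, mem_setOf_eq, not_forall] at ht
  obtain ⟨δ, hδ, hzero⟩ := ht
  rw [not_lt, le_zero_iff] at hzero
  refine ⟨δ / 2, by linarith, fun t' ht' => ?_⟩
  rw [Metric.mem_ball, Real.dist_eq] at ht'
  have habs := abs_lt.mp ht'
  simp only [supp, mem_compl_iff, mem_setOf_eq, not_forall]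
  refine ⟨δ / 2, ⟨by linarith, ?_⟩⟩
  rw [not_lt, le_zero_iff]
  refine measure_mono_null (fun ω hω => ?_) hzero
  simp only [mem_setOf_eq, mem_Icc] at hω ⊢
  constructor <;> linarith [hω.1, hω.2]

/-- Almost surely, a random variable takes values in its support. -/
lemma ae_mem_supp (μ : Measure Ω) [IsProbabilityMeasure μ] {Θ : Ω → ℝ}
    (hΘ : Measurable Θ) : μ {ω | Θ ω ∉ supp μ Θ} = 0 := by
  have hmap : (μ.map Θ) (supp μ Θ)ᶜ = 0 := by
    apply measure_null_of_locally_null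
    intro t ht
    simp only [supp, mem_compl_iff, mem_setOf_eq, not_forall] at ht
    obtain ⟨δ, hδ, hzero⟩ := ht
    rw [not_lt, le_zero_iff] at hzero
    refine ⟨Icc (t - δ) (t + δ), nhdsWithin_le_nhds (Icc_mem_nhds (by linarith) (by linarith)), ?_⟩
    rw [Measure.map_apply hΘ measurableSet_Icc]
    exact hzero
  have hle : μ (Θ ⁻¹' (supp μ Θ)ᶜ) ≤ (μ.map Θ) (supp μ Θ)ᶜ :=
    Measure.le_map_apply hΘ.aemeasurable _
  exact le_antisymm (hmap ▸ hle) zero_le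

/-- The support of a random variable is nonempty. -/
lemma supp_nonempty (μ : Measure Ω) [IsProbabilityMeasure μ] {Θ : Ω → ℝ}
    (hΘ : Measurable Θ) : (supp μ Θ).Nonempty := by
  by_contra h
  rw [Set.not_nonempty_iff_eq_empty] at h
  have h1 : μ {ω | Θ ω ∉ supp μ Θ} = 0 := ae_mem_supp μ hΘ
  have h2 : {ω | Θ ω ∉ supp μ Θ} = Set.univ := by
    ext ω; simp [h]
  rw [h2, measure_univ] at h1
  exact one_ne_zero h1

private lemma aux_le_one {r : ℝ} (hr2 : r ≤ 2) (h : ∀ ε : ℝ, ε ∈ Ioo (0:ℝ) 1 → (1 - ε) * r ≤ 1) :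
    r ≤ 1 := by
  refine le_of_forall_pos_le_add fun δ hδ => ?_
  have hε : min (δ / 2) (1 / 2) ∈ Ioo (0:ℝ) 1 := by
    constructor
    · exact lt_min (by linarith) (by norm_num)
    · exact lt_of_le_of_lt (min_le_right _ _) (by norm_num)
  have h1 := h _ hε
  have h2 : min (δ / 2) (1 / 2) ≤ δ / 2 := min_le_left _ _
  nlinarith [hε.1]

private lemma aux_ge_one {r : ℝ} (h : ∀ ε : ℝ, ε ∈ Ioo (0:ℝ) 1 → 1 ≤ (1 + ε) * r) :
    1 ≤ r := by
  have hr0 : 0 ≤ r := by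
    have := h (1/2) (by norm_num)
    nlinarith
  have : r + 1 ≤ r + r := by
    refine le_of_forall_pos_le_add fun δ hδ => ?_
    have hε : min (δ / 2) (1 / 2) ∈ Ioo (0:ℝ) 1 := by
      constructor
      · exact lt_min (by linarith) (by norm_num)
      · exact lt_of_le_of_lt (min_le_right _ _) (by norm_num)
    have h1 := h _ hε
    have h2 : min (δ / 2) (1 / 2) ≤ δ / 2 := min_le_left _ _
    have h3 : min (δ / 2) (1 / 2) ≤ 1 / 2 := min_le_right _ _
    nlinarith [hε.1]
  linarith

/-- under Assumption A2, `E[g i j (Θ i, Θ j)] = 1` for every pair `i ≠ j`. -/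
theorem statement_1
    (n : ℕ) (hn : 0 < n)
    (μ : Measure Ω) [IsProbabilityMeasure μ]
    (X Θ : Fin n → Ω → ℝ)
    (hXm : ∀ i, Measurable (X i)) (hΘm : ∀ i, Measurable (Θ i))
    (hF : ∀ i, ∀ x : ℝ, 0 ≤ x → 0 < tail μ (X i) x)
    (hΘnn : ∀ i ω, 0 ≤ Θ i ω)
    (hΘnd : ∀ i, NonDegAtZero μ (Θ i))
    (g : Fin n → Fin n → ℝ → ℝ → ℝ) (hA2 : A2 μ X Θ g) :
    ∀ i j, i ≠ j → ∫ ω, g i j (Θ i ω) (Θ j ω) ∂μ = 1 := by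
  intro i j hij
  obtain ⟨hgm, hgpos, cp, hcp, hunif⟩ := hA2 i j hij
  -- The joint law of `(Θ i, Θ j)` on `ℝ × ℝ`
  set T : Ω → ℝ × ℝ := fun ω => (Θ i ω, Θ j ω) with hTdef
  have hT : Measurable T := (hΘm i).prodMk (hΘm j)
  set ν : Measure (ℝ × ℝ) := μ.map T with hνdef
  haveI : IsProbabilityMeasure ν := Measure.isProbabilityMeasure_map hT.aemeasurable
  -- the support set
  set S : Set (ℝ × ℝ) := supp μ (Θ i) ×ˢ supp μ (Θ j) with hSdef
  have hSne : S.Nonempty := (supp_nonempty μ (hΘm i)).prod (supp_nonempty μ (hΘm j))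
  -- almost every point (w.r.t. ν) is in the support and has nonnegative coordinates
  have hae1 : ∀ᵐ θ ∂ν, θ.1 ∈ supp μ (Θ i) := by
    rw [ae_iff]
    have hmeas : MeasurableSet ((Prod.fst : ℝ × ℝ → ℝ) ⁻¹' (supp μ (Θ i))ᶜ) :=
      (isOpen_compl_supp μ (Θ i)).measurableSet.preimage measurable_fst
    have : {θ : ℝ × ℝ | ¬ θ.1 ∈ supp μ (Θ i)} =
        (Prod.fst : ℝ × ℝ → ℝ) ⁻¹' (supp μ (Θ i))ᶜ := rfl
    rw [this, hνdef, Measure.map_apply hT hmeas]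
    exact ae_mem_supp μ (hΘm i)
  have hae2 : ∀ᵐ θ ∂ν, θ.2 ∈ supp μ (Θ j) := by
    rw [ae_iff]
    have hmeas : MeasurableSet ((Prod.snd : ℝ × ℝ → ℝ) ⁻¹' (supp μ (Θ j))ᶜ) :=
      (isOpen_compl_supp μ (Θ j)).measurableSet.preimage measurable_snd
    have : {θ : ℝ × ℝ | ¬ θ.2 ∈ supp μ (Θ j)} =
        (Prod.snd : ℝ × ℝ → ℝ) ⁻¹' (supp μ (Θ j))ᶜ := rfl
    rw [this, hνdef, Measure.map_apply hT hmeas]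
    exact ae_mem_supp μ (hΘm j)
  have hae3 : ∀ᵐ θ ∂ν, 0 ≤ θ.1 ∧ 0 ≤ θ.2 := by
    rw [ae_iff]
    have hmeas : MeasurableSet {θ : ℝ × ℝ | ¬ (0 ≤ θ.1 ∧ 0 ≤ θ.2)} := by
      apply MeasurableSet.compl
      exact (measurable_fst measurableSet_Ici).inter (measurable_snd measurableSet_Ici)
    rw [hνdef, Measure.map_apply hT hmeas]
    have : T ⁻¹' {θ : ℝ × ℝ | ¬ (0 ≤ θ.1 ∧ 0 ≤ θ.2)} = (∅ : Set Ω) := by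
      ext ω
      simp [T, hΘnn i ω, hΘnn j ω]
    rw [this, measure_empty]
  -- the integral to compute, in `ENNReal`
  set I : ENNReal := ∫⁻ θ, ENNReal.ofReal (g i j θ.1 θ.2) ∂ν with hIdef
  -- the key two-sided bound, for every `ε ∈ (0,1)`
  have key : ∀ ε : ℝ, ε ∈ Ioo (0:ℝ) 1 →
      ENNReal.ofReal (1 - ε) * I ≤ 1 ∧ 1 ≤ ENNReal.ofReal (1 + ε) * I := by
    intro ε hε
    -- pick a pair of thresholds where the uniform bound holds
    obtain ⟨x, hx⟩ := ((Metric.tendstoUniformlyOn_iff.mp hunif) ε hε.1).exists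
    -- the event and its probability
    set A : Set Ω := {ω | |X i ω| > x.1 ∧ X j ω > x.2} with hAdef
    have hA : MeasurableSet A :=
      (measurableSet_lt measurable_const (hXm i).abs).inter
        (measurableSet_lt measurable_const (hXm j))
    set P : ℝ := pr μ {ω | |X i ω| > x.1 ∧ X j ω > x.2} with hPdef
    have hPA : P = (μ A).toReal := rfl
    -- the conditional measure `ρ` and its density `f`
    set ρ : Measure (ℝ × ℝ) := (μ.restrict A).map T with hρdef
    haveI : IsFiniteMeasure ρ := Measure.isFiniteMeasure_map _ _
    have hρν : ρ ≪ ν := by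
      refine Measure.AbsolutelyContinuous.mk fun s hs h0 => ?_
      rw [hρdef, Measure.map_apply hT hs, Measure.restrict_apply (hT hs)]
      rw [hνdef, Measure.map_apply hT hs] at h0
      exact measure_mono_null inter_subset_left h0
    set f : ℝ × ℝ → ENNReal := ρ.rnDeriv ν with hfdef
    have hfint : ∫⁻ θ, f θ ∂ν = μ A := by
      rw [hfdef, Measure.lintegral_rnDeriv hρν, hρdef,
        Measure.map_apply hT MeasurableSet.univ, preimage_univ, Measure.restrict_apply_univ]
    -- identify the conditional probabilities `cp` with the density a.e.
    have hkey : ∀ᵐ θ ∂ν, θ ∈ S → f θ < ⊤ → cp θ.1 θ.2 x.1 x.2 = (f θ).toReal := by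
      filter_upwards [Besicovitch.ae_tendsto_rnDeriv ρ ν] with θ hB hθS hflt
      have hcp' := hcp θ.1 hθS.1 θ.2 hθS.2 x.1 x.2
      have heq : ∀ δ : ℝ,
          pr μ (A ∩ {ω | Θ i ω ∈ Icc (θ.1 - δ) (θ.1 + δ) ∧ Θ j ω ∈ Icc (θ.2 - δ) (θ.2 + δ)}) /
            pr μ {ω | Θ i ω ∈ Icc (θ.1 - δ) (θ.1 + δ) ∧ Θ j ω ∈ Icc (θ.2 - δ) (θ.2 + δ)} =
          (ρ (Metric.closedBall θ δ) / ν (Metric.closedBall θ δ)).toReal := by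
        intro δ
        have hball : Metric.closedBall θ δ =
            Icc (θ.1 - δ) (θ.1 + δ) ×ˢ Icc (θ.2 - δ) (θ.2 + δ) := by
          rw [← Prod.mk.eta (p := θ), ← closedBall_prod_same,
            Real.closedBall_eq_Icc, Real.closedBall_eq_Icc]
        have hset : {ω | Θ i ω ∈ Icc (θ.1 - δ) (θ.1 + δ) ∧ Θ j ω ∈ Icc (θ.2 - δ) (θ.2 + δ)} =
            T ⁻¹' Metric.closedBall θ δ := by
          ext ω
          simp [hball, T, Set.mem_prod]
          tauto
        have hν' : ν (Metric.closedBall θ δ) = μ (T ⁻¹' Metric.closedBall θ δ) :=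
          Measure.map_apply hT measurableSet_closedBall
        have hρ' : ρ (Metric.closedBall θ δ) = μ (A ∩ T ⁻¹' Metric.closedBall θ δ) := by
          rw [hρdef, Measure.map_apply hT measurableSet_closedBall,
            Measure.restrict_apply (hT measurableSet_closedBall), inter_comm]
        rw [hset, ENNReal.toReal_div]
        simp only [pr]
        rw [hρ', hν']
      have hcp'' : Tendsto (fun δ : ℝ =>
          (ρ (Metric.closedBall θ δ) / ν (Metric.closedBall θ δ)).toReal)
          (nhdsWithin 0 (Ioi 0)) (nhds (cp θ.1 θ.2 x.1 x.2)) := by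
        refine hcp'.congr fun δ => heq δ
      have hB' : Tendsto (fun δ : ℝ =>
          (ρ (Metric.closedBall θ δ) / ν (Metric.closedBall θ δ)).toReal)
          (nhdsWithin 0 (Ioi 0)) (nhds (f θ).toReal) :=
        (ENNReal.tendsto_toReal hflt.ne).comp hB
      exact tendsto_nhds_unique hcp'' hB'
    -- `P` is positive
    have hP : 0 < P := by
      rcases hSne with ⟨θ0, hθ0⟩
      have hd0 := hx θ0 hθ0
      rcases lt_or_ge 0 P with h | h
      · exact h
      · exfalso
        have hP0 : P = 0 := le_antisymm h ENNReal.toReal_nonneg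
        rw [hP0, mul_zero, div_zero, dist_zero_right] at hd0
        simp only [norm_one] at hd0
        linarith [hε.2]
    have hgP : ENNReal.ofReal P ≠ 0 := (ENNReal.ofReal_pos.mpr hP).ne'
    have hPtop : ENNReal.ofReal P ≠ ⊤ := ENNReal.ofReal_ne_top
    have hμA : ENNReal.ofReal P = μ A := by
      rw [hPA]; exact ENNReal.ofReal_toReal (measure_ne_top μ A)
    -- the two-sided a.e. bound on `f`
    have hbound : ∀ᵐ θ ∂ν,
        ENNReal.ofReal (1 - ε) * (ENNReal.ofReal (g i j θ.1 θ.2) * ENNReal.ofReal P) ≤ f θ ∧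
        f θ ≤ ENNReal.ofReal (1 + ε) * (ENNReal.ofReal (g i j θ.1 θ.2) * ENNReal.ofReal P) := by
      filter_upwards [hkey, hae1, hae2, hae3, Measure.rnDeriv_lt_top ρ ν]
        with θ hk h1 h2 h3 hflt
      have hθS : θ ∈ S := ⟨h1, h2⟩
      have hceq := hk hθS hflt
      have hgpos' : 0 < g i j θ.1 θ.2 := hgpos θ.1 θ.2 h3.1 h3.2
      have hgPpos : 0 < g i j θ.1 θ.2 * P := mul_pos hgpos' hP
      have hd := hx θ hθS
      rw [Real.dist_eq, abs_lt] at hd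
      set c : ℝ := cp θ.1 θ.2 x.1 x.2 with hcdef
      have hc1 : (1 - ε) * (g i j θ.1 θ.2 * P) < c :=
        (lt_div_iff₀ hgPpos).mp (by linarith [hd.2])
      have hc2 : c < (1 + ε) * (g i j θ.1 θ.2 * P) :=
        (div_lt_iff₀ hgPpos).mp (by linarith [hd.1])
      have hfθ : ENNReal.ofReal c = f θ := by
        rw [hceq]; exact ENNReal.ofReal_toReal hflt.ne
      constructor
      · calc ENNReal.ofReal (1 - ε) * (ENNReal.ofReal (g i j θ.1 θ.2) * ENNReal.ofReal P)
            = ENNReal.ofReal ((1 - ε) * (g i j θ.1 θ.2 * P)) := by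
              rw [ENNReal.ofReal_mul (by linarith [hε.2] : (0:ℝ) ≤ 1 - ε),
                ENNReal.ofReal_mul hgpos'.le]
          _ ≤ ENNReal.ofReal c := ENNReal.ofReal_le_ofReal hc1.le
          _ = f θ := hfθ
      · calc f θ = ENNReal.ofReal c := hfθ.symm
          _ ≤ ENNReal.ofReal ((1 + ε) * (g i j θ.1 θ.2 * P)) := ENNReal.ofReal_le_ofReal hc2.le
          _ = ENNReal.ofReal (1 + ε) * (ENNReal.ofReal (g i j θ.1 θ.2) * ENNReal.ofReal P) := by
              rw [ENNReal.ofReal_mul (by linarith [hε.1] : (0:ℝ) ≤ 1 + ε),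
                ENNReal.ofReal_mul hgpos'.le]
    -- integrate the bounds
    have hconst_ne_top : ∀ a : ℝ, ENNReal.ofReal a * ENNReal.ofReal P ≠ ⊤ :=
      fun a => ENNReal.mul_ne_top ENNReal.ofReal_ne_top ENNReal.ofReal_ne_top
    have hlow : ENNReal.ofReal (1 - ε) * ENNReal.ofReal P * I ≤ μ A := by
      rw [← hfint]
      calc ENNReal.ofReal (1 - ε) * ENNReal.ofReal P * I
          = ∫⁻ θ, ENNReal.ofReal (1 - ε) * ENNReal.ofReal P *
              ENNReal.ofReal (g i j θ.1 θ.2) ∂ν := by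
            rw [hIdef, lintegral_const_mul' _ _ (hconst_ne_top (1 - ε))]
        _ ≤ ∫⁻ θ, f θ ∂ν := by
            refine lintegral_mono_ae (hbound.mono fun θ h => ?_)
            calc ENNReal.ofReal (1 - ε) * ENNReal.ofReal P * ENNReal.ofReal (g i j θ.1 θ.2)
                = ENNReal.ofReal (1 - ε) * (ENNReal.ofReal (g i j θ.1 θ.2) * ENNReal.ofReal P) :=
                  by ring
              _ ≤ f θ := h.1
    have hhigh : μ A ≤ ENNReal.ofReal (1 + ε) * ENNReal.ofReal P * I := by
      rw [← hfint]
      calc ∫⁻ θ, f θ ∂ν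
          ≤ ∫⁻ θ, ENNReal.ofReal (1 + ε) * ENNReal.ofReal P *
              ENNReal.ofReal (g i j θ.1 θ.2) ∂ν := by
            refine lintegral_mono_ae (hbound.mono fun θ h => ?_)
            calc f θ ≤ ENNReal.ofReal (1 + ε) *
                  (ENNReal.ofReal (g i j θ.1 θ.2) * ENNReal.ofReal P) := h.2
              _ = ENNReal.ofReal (1 + ε) * ENNReal.ofReal P * ENNReal.ofReal (g i j θ.1 θ.2) :=
                  by ring
        _ = ENNReal.ofReal (1 + ε) * ENNReal.ofReal P * I := by
            rw [hIdef, lintegral_const_mul' _ _ (hconst_ne_top (1 + ε))]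
    constructor
    · have : ENNReal.ofReal P * (ENNReal.ofReal (1 - ε) * I) ≤ ENNReal.ofReal P * 1 := by
        rw [mul_one]
        calc ENNReal.ofReal P * (ENNReal.ofReal (1 - ε) * I)
            = ENNReal.ofReal (1 - ε) * ENNReal.ofReal P * I := by ring
          _ ≤ μ A := hlow
          _ = ENNReal.ofReal P := hμA.symm
      exact (ENNReal.mul_le_mul_iff_right hgP hPtop).mp this
    · have : ENNReal.ofReal P * 1 ≤ ENNReal.ofReal P * (ENNReal.ofReal (1 + ε) * I) := by
        rw [mul_one]
        calc ENNReal.ofReal P = μ A := hμA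
          _ ≤ ENNReal.ofReal (1 + ε) * ENNReal.ofReal P * I := hhigh
          _ = ENNReal.ofReal P * (ENNReal.ofReal (1 + ε) * I) := by ring
      exact (ENNReal.mul_le_mul_iff_right hgP hPtop).mp this
  -- deduce `I = 1`
  have hItop : I ≠ ⊤ := by
    intro hI
    have h12 := (key (1/2) (by norm_num)).1
    rw [hI, ENNReal.mul_top (by simp; norm_num)] at h12
    exact (by simp : ¬ (⊤ : ENNReal) ≤ 1) h12
  have hr2 : I.toReal ≤ 2 := by
    have h12 := (key (1/2) (by norm_num)).1
    have := ENNReal.toReal_mono (by simp) h12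
    rw [ENNReal.toReal_mul, ENNReal.toReal_ofReal (by norm_num)] at this
    simp only [ENNReal.toReal_one] at this
    linarith
  have hub : ∀ ε : ℝ, ε ∈ Ioo (0:ℝ) 1 → (1 - ε) * I.toReal ≤ 1 := by
    intro ε hε
    have h := (key ε hε).1
    have := ENNReal.toReal_mono (by simp) h
    rw [ENNReal.toReal_mul, ENNReal.toReal_ofReal (by linarith [hε.2])] at this
    simpa using this
  have hlb : ∀ ε : ℝ, ε ∈ Ioo (0:ℝ) 1 → 1 ≤ (1 + ε) * I.toReal := by
    intro ε hε
    have h := (key ε hε).2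
    have := ENNReal.toReal_mono
      (ENNReal.mul_ne_top ENNReal.ofReal_ne_top hItop) h
    rw [ENNReal.toReal_mul, ENNReal.toReal_ofReal (by linarith [hε.1])] at this
    simpa using this
  have hI1 : I.toReal = 1 := le_antisymm (aux_le_one hr2 hub) (aux_ge_one hlb)
  -- convert back to the Bochner integral
  have h0 : (0:Ω → ℝ) ≤ᵐ[μ] fun ω => g i j (Θ i ω) (Θ j ω) :=
    Filter.Eventually.of_forall fun ω => (hgpos _ _ (hΘnn i ω) (hΘnn j ω)).le
  have hgcomp : Measurable fun ω => g i j (Θ i ω) (Θ j ω) := hgm.comp hT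
  rw [integral_eq_lintegral_of_nonneg_ae h0 hgcomp.aestronglyMeasurable]
  have hmap : I = ∫⁻ ω, ENNReal.ofReal (g i j (Θ i ω) (Θ j ω)) ∂μ := by
    rw [hIdef, hνdef]
    exact lintegral_map (ENNReal.measurable_ofReal.comp hgm) hT
  rw [← hmap, hI1]

end RWS
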